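/- (Infinite-horizon Parisian ruin) For u ≥ 1 and integer delay ζ ≥ 1, P_u(τ^ζ < ∞) = P_u(T_0 < ∞) − (1 − P_1(τ^ζ < ∞)) Σ_{z=0}^{ζ−1} P_u(T_0 < ∞, −R_{T_0} = z) · P(τ_{z+1} ≤ ζ), where P_1(τ^ζ < ∞) = [P_1(T_0 < ∞) − A] / [1 − A] with A = Σ_{z=0}^{ζ−1} P_1(T_0 < ∞, −R_{T_0} = z) P(τ_{z+1} ≤ ζ). -/

import Mathlib

open MeasureTheory ProbabilityTheory Filter
open scoped ENNReal

noncomputable section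

variable {Ω : Type*} [MeasureSpace Ω]

/-- Aggregate claims `S_t = Y_1 + ... + Y_t`. -/
def aggClaims (Y : ℕ → Ω → ℕ) (t : ℕ) (ω : Ω) : ℕ := ∑ i ∈ Finset.range t, Y i ω

/-- Risk process `R_t = u + t - S_t`. -/
def riskProc (Y : ℕ → Ω → ℕ) (u : ℤ) (t : ℕ) (ω : Ω) : ℤ := u + t - aggClaims Y t ω

/-- Classical ruin time `T_0 = inf {t ≥ 1 : R_t ≤ 0}`. -/
def ruinTime (Y : ℕ → Ω → ℕ) (u : ℤ) (ω : Ω) : ℕ∞ :=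
  sInf ((fun t : ℕ => (t : ℕ∞)) '' {t : ℕ | 1 ≤ t ∧ riskProc Y u t ω ≤ 0})

/-- Last time strictly before `n` at which the risk process was strictly positive. -/
def lastUp (Y : ℕ → Ω → ℕ) (u : ℤ) (n : ℕ) (ω : Ω) : ℕ :=
  sSup {s : ℕ | s < n ∧ 0 < riskProc Y u s ω}

/-- Parisian ruin time with delay `ζ`. -/
def parisian (Y : ℕ → Ω → ℕ) (u : ℤ) (ζ : ℕ) (ω : Ω) : ℕ∞ :=
  sInf ((fun n : ℕ => (n : ℕ∞)) ''
    {n : ℕ | ζ < n - lastUp Y u n ω ∧ riskProc Y u n ω ≤ 0})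

/-- First hitting time of level `x` by the walk started at `0`. -/
def hitTime (Y : ℕ → Ω → ℕ) (x : ℤ) (ω : Ω) : ℕ∞ :=
  sInf ((fun n : ℕ => (n : ℕ∞)) '' {n : ℕ | 1 ≤ n ∧ riskProc Y 0 n ω = x})

set_option linter.unusedSectionVars false
set_option maxHeartbeats 1000000

/-! ### Generic `sInf` lemmas over `ℕ∞` -/

lemma sInf_image_eq_top_iff {T : Set ℕ} :
    sInf ((fun t : ℕ => (t : ℕ∞)) '' T) = ⊤ ↔ T = ∅ := by
  constructor
  · intro h
    by_contra hne
    obtain ⟨t, ht⟩ := Set.nonempty_iff_ne_empty.2 hne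
    have : sInf ((fun t : ℕ => (t : ℕ∞)) '' T) ≤ (t : ℕ∞) :=
      sInf_le ⟨t, ht, rfl⟩
    rw [h] at this
    exact (ENat.coe_lt_top t).not_ge this
  · intro h; rw [h]; simp

lemma sInf_image_of_nonempty {T : Set ℕ} (h : T.Nonempty) :
    sInf ((fun t : ℕ => (t : ℕ∞)) '' T) = ((sInf T : ℕ) : ℕ∞) := by
  apply le_antisymm
  · exact sInf_le ⟨sInf T, Nat.sInf_mem h, rfl⟩
  · apply le_sInf
    rintro x ⟨t, ht, rfl⟩
    exact Nat.cast_le.mpr (Nat.sInf_le ht)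

lemma sInf_image_eq_coe_iff {T : Set ℕ} {t : ℕ} :
    sInf ((fun t : ℕ => (t : ℕ∞)) '' T) = (t : ℕ∞) ↔ t ∈ T ∧ ∀ s ∈ T, t ≤ s := by
  constructor
  · intro h
    have hne : T.Nonempty := by
      by_contra hne
      rw [Set.not_nonempty_iff_eq_empty] at hne
      rw [sInf_image_eq_top_iff.2 hne] at h
      exact (ENat.coe_lt_top t).ne' h
    rw [sInf_image_of_nonempty hne] at h
    have ht : sInf T = t := by exact_mod_cast h
    exact ⟨ht ▸ Nat.sInf_mem hne, fun s hs => ht ▸ Nat.sInf_le hs⟩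
  · rintro ⟨htT, hle⟩
    have hne : T.Nonempty := ⟨t, htT⟩
    rw [sInf_image_of_nonempty hne]
    have : sInf T = t := le_antisymm (Nat.sInf_le htT) (hle _ (Nat.sInf_mem hne))
    exact_mod_cast this

lemma sInf_image_le_coe_iff {T : Set ℕ} {m : ℕ} :
    sInf ((fun t : ℕ => (t : ℕ∞)) '' T) ≤ (m : ℕ∞) ↔ ∃ t ∈ T, t ≤ m := by
  constructor
  · intro h
    have hne : T.Nonempty := by
      by_contra hne
      rw [Set.not_nonempty_iff_eq_empty] at hne
      rw [sInf_image_eq_top_iff.2 hne] at h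
      exact (ENat.coe_lt_top m).not_ge h
    rw [sInf_image_of_nonempty hne] at h
    exact ⟨sInf T, Nat.sInf_mem hne, by exact_mod_cast h⟩
  · rintro ⟨t, ht, htm⟩
    exact le_trans (sInf_le ⟨t, ht, rfl⟩) (Nat.cast_le.mpr htm)

/-! ### Risk process basics -/

variable {Y : ℕ → Ω → ℕ} {u : ℤ} {ζ : ℕ} {ω : Ω}

lemma riskProc_zero : riskProc Y u 0 ω = u := by simp [riskProc, aggClaims]

/-- Shift decomposition of the risk process. -/
lemma riskProc_add (t k : ℕ) :
    riskProc Y u (t + k) ω = riskProc Y u t ω + riskProc (fun i => Y (t + i)) 0 k ω := by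
  simp only [riskProc, aggClaims]
  have : ∑ i ∈ Finset.range (t + k), (Y i ω : ℤ) =
      ∑ i ∈ Finset.range t, (Y i ω : ℤ) + ∑ i ∈ Finset.range k, (Y (t + i) ω : ℤ) := by
    rw [Finset.sum_range_add]
  push_cast
  push_cast at this
  rw [this]; ring

lemma riskProc_succ_le (t : ℕ) : riskProc Y u (t + 1) ω ≤ riskProc Y u t ω + 1 := by
  simp only [riskProc, aggClaims, Finset.sum_range_succ]
  have : (0 : ℤ) ≤ (Y t ω : ℤ) := Int.natCast_nonneg _
  push_cast
  omega

/-- If the walk stays `≠ x` (with `x` above the start) then it stays `≤ x - 1`. -/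
lemma riskProc_le_of_ne {x : ℤ} (hx : u + 1 ≤ x) {n : ℕ}
    (h : ∀ k, 1 ≤ k → k ≤ n → riskProc Y u k ω ≠ x) : riskProc Y u n ω ≤ x - 1 := by
  induction n with
  | zero => rw [riskProc_zero]; omega
  | succ m ih =>
    have hm : riskProc Y u m ω ≤ x - 1 := ih (fun k h1 h2 => h k h1 (h2.trans m.le_succ))
    have hstep := riskProc_succ_le (Y := Y) (u := u) (ω := ω) m
    have hne := h (m+1) (Nat.le_add_left 1 m) le_rfl
    omega

/-! ### Characterizations of the random times -/

lemma ruinTime_eq_top_iff (hu : 1 ≤ u) :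
    ruinTime Y u ω = ⊤ ↔ ∀ t, 0 < riskProc Y u t ω := by
  rw [ruinTime, sInf_image_eq_top_iff, Set.eq_empty_iff_forall_notMem]
  constructor
  · intro h t
    rcases Nat.eq_zero_or_pos t with rfl | ht
    · rw [riskProc_zero]; omega
    · by_contra hc
      exact h t ⟨ht, by omega⟩
  · rintro h t ⟨-, h2⟩
    exact absurd (h t) (by omega)

lemma ruinTime_eq_coe_iff {t : ℕ} :
    ruinTime Y u ω = (t : ℕ∞) ↔
      (1 ≤ t ∧ riskProc Y u t ω ≤ 0) ∧ ∀ s, 1 ≤ s → s < t → 0 < riskProc Y u s ω := by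
  rw [ruinTime, sInf_image_eq_coe_iff]
  constructor
  · rintro ⟨h1, h2⟩
    refine ⟨h1, fun s hs1 hst => ?_⟩
    by_contra hc
    exact absurd (h2 s ⟨hs1, by omega⟩) (by omega)
  · rintro ⟨h1, h2⟩
    refine ⟨h1, fun s hs => ?_⟩
    obtain ⟨hs1, hs2⟩ := hs
    by_contra hc
    exact absurd (h2 s hs1 (by omega)) (by omega)

lemma hitTime_eq_coe_iff {x : ℤ} {ρ : ℕ} :
    hitTime Y x ω = (ρ : ℕ∞) ↔
      (1 ≤ ρ ∧ riskProc Y 0 ρ ω = x) ∧ ∀ k, 1 ≤ k → k < ρ → riskProc Y 0 k ω ≠ x := by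
  rw [hitTime, sInf_image_eq_coe_iff]
  constructor
  · rintro ⟨h1, h2⟩
    refine ⟨h1, fun k hk1 hkρ hc => ?_⟩
    exact absurd (h2 k ⟨hk1, hc⟩) (by omega)
  · rintro ⟨h1, h2⟩
    refine ⟨h1, fun k hk => ?_⟩
    by_contra hc
    exact h2 k hk.1 (by omega) hk.2

lemma hitTime_le_coe_iff {x : ℤ} {m : ℕ} :
    hitTime Y x ω ≤ (m : ℕ∞) ↔ ∃ n, 1 ≤ n ∧ n ≤ m ∧ riskProc Y 0 n ω = x := by
  rw [hitTime, sInf_image_le_coe_iff]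
  constructor
  · rintro ⟨t, ⟨h1, h2⟩, h3⟩; exact ⟨t, h1, h3, h2⟩
  · rintro ⟨n, h1, h2, h3⟩; exact ⟨n, ⟨h1, h3⟩, h2⟩

/-- The window characterization of Parisian ruin, key pathwise lemma. -/
lemma parisian_ne_top_iff (hu : 1 ≤ u) (hζ : 1 ≤ ζ) :
    parisian Y u ζ ω ≠ ⊤ ↔ ∃ a, ∀ j ≤ ζ, riskProc Y u (a + j) ω ≤ 0 := by
  rw [parisian, Ne, sInf_image_eq_top_iff, ← Ne, Set.nonempty_iff_ne_empty.symm]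
  constructor
  · rintro ⟨n, hn1, hn2⟩
    -- the last up time is a member of the set of up times
    set L := lastUp Y u n ω with hL
    have hn0 : 1 ≤ n := by
      by_contra hc
      have : n = 0 := by omega
      subst this
      omega
    have hmem : L ∈ {s : ℕ | s < n ∧ 0 < riskProc Y u s ω} := by
      rw [hL, lastUp]
      apply Nat.sSup_mem
      · refine ⟨0, ?_⟩
        have h0 : 0 < riskProc Y u 0 ω := by rw [riskProc_zero]; omega
        simp only [Set.mem_setOf_eq]
        exact ⟨hn0, h0⟩
      · exact ⟨n, fun s hs => hs.1.le⟩
    have hLn : L < n := hmem.1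
    have hgap : L + ζ < n := by omega
    refine ⟨n - ζ, fun j hj => ?_⟩
    have hidx : n - ζ + j ≤ n := by omega
    rcases eq_or_lt_of_le hidx with he | hlt
    · rw [he]; exact hn2
    · by_contra hc
      have hmem2 : (n - ζ + j) ∈ {s : ℕ | s < n ∧ 0 < riskProc Y u s ω} := by
        simp only [Set.mem_setOf_eq]; exact ⟨hlt, by omega⟩
      have : n - ζ + j ≤ L := le_csSup ⟨n, fun s hs => hs.1.le⟩ hmem2
      omega
  · rintro ⟨a, ha⟩
    have ha0 : 1 ≤ a := by
      by_contra hc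
      have : a = 0 := by omega
      subst this
      have := ha 0 (by omega)
      rw [riskProc_zero] at this; omega
    refine ⟨a + ζ, ?_, by simpa using ha ζ le_rfl⟩
    have hne0 : 0 ∈ {s : ℕ | s < a + ζ ∧ 0 < riskProc Y u s ω} := by
      have h0 : 0 < riskProc Y u 0 ω := by rw [riskProc_zero]; omega
      simp only [Set.mem_setOf_eq]
      exact ⟨by omega, h0⟩
    have hub : lastUp Y u (a + ζ) ω ≤ a - 1 := by
      apply csSup_le ⟨0, hne0⟩
      rintro s ⟨hs1, hs2⟩
      by_contra hc
      have hsa : a ≤ s := by omega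
      have := ha (s - a) (by omega)
      rw [Nat.add_sub_cancel' hsa] at this
      omega
    omega

/-! ### Decomposition of the no-Parisian-ruin event -/

/-- Shifted claims sequence. -/
def shiftY (Y : ℕ → Ω → ℕ) (t : ℕ) : ℕ → Ω → ℕ := fun i => Y (t + i)

lemma riskProc_shift (t k : ℕ) :
    riskProc Y u (t + k) ω = riskProc Y u t ω + riskProc (shiftY Y t) 0 k ω :=
  riskProc_add t k

lemma riskProc_eq_add (v : ℤ) (k : ℕ) :
    riskProc Y v k ω = v + riskProc Y 0 k ω := by
  simp only [riskProc]; ring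

lemma riskProc_zero_le_self (k : ℕ) : riskProc Y 0 k ω ≤ k := by
  simp only [riskProc]
  have := Int.natCast_nonneg (aggClaims Y k ω)
  omega

lemma parisian_eq_top_iff (hu : 1 ≤ u) (hζ : 1 ≤ ζ) :
    parisian Y u ζ ω = ⊤ ↔ ∀ a, ∃ j, j ≤ ζ ∧ 0 < riskProc Y u (a + j) ω := by
  have hnn : (parisian Y u ζ ω = ⊤) ↔ ¬ (parisian Y u ζ ω ≠ ⊤) := by tauto
  rw [hnn, parisian_ne_top_iff hu hζ]
  push_neg
  exact forall_congr' fun a => by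
    constructor
    · intro h
      obtain ⟨j, hj1, hj2⟩ := h
      exact ⟨j, hj1, by omega⟩
    · rintro ⟨j, hj1, hj2⟩
      exact ⟨j, hj1, by omega⟩

lemma parisian_decomp (hu : 1 ≤ u) (hζ : 1 ≤ ζ) :
    parisian Y u ζ ω = ⊤ ↔ ruinTime Y u ω = ⊤ ∨
      ∃ z t ρ : ℕ, z < ζ ∧ 1 ≤ ρ ∧ ρ ≤ ζ ∧
        ruinTime Y u ω = (t : ℕ∞) ∧ riskProc Y u t ω = -(z : ℤ) ∧
        hitTime (shiftY Y t) ((z : ℤ) + 1) ω = (ρ : ℕ∞) ∧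
        parisian (shiftY Y (t + ρ)) 1 ζ ω = ⊤ := by
  rw [parisian_eq_top_iff hu hζ]
  constructor
  · intro hP
    by_cases hR : ruinTime Y u ω = ⊤
    · exact Or.inl hR
    right
    -- extract the first ruin time
    have hTne : {s : ℕ | 1 ≤ s ∧ riskProc Y u s ω ≤ 0}.Nonempty := by
      by_contra hc
      rw [Set.not_nonempty_iff_eq_empty] at hc
      exact hR (by rw [ruinTime]; exact sInf_image_eq_top_iff.2 hc)
    set t := sInf {s : ℕ | 1 ≤ s ∧ riskProc Y u s ω ≤ 0} with htdef
    have hrt : ruinTime Y u ω = (t : ℕ∞) := by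
      rw [ruinTime, sInf_image_of_nonempty hTne]
    obtain ⟨⟨ht1, ht2⟩, ht3⟩ := ruinTime_eq_coe_iff.1 hrt
    set z := (-(riskProc Y u t ω)).toNat with hzdef
    have hz : riskProc Y u t ω = -(z : ℤ) := by
      have := Int.toNat_of_nonneg (neg_nonneg.2 ht2)
      omega
    -- the first moment afterwards at which the process is positive
    have hex : ∃ j, 0 < riskProc Y u (t + j) ω := by
      obtain ⟨j, _, hj2⟩ := hP t; exact ⟨j, hj2⟩
    set ρ := Nat.find hex with hρdef
    have hρpos : 0 < riskProc Y u (t + ρ) ω := Nat.find_spec hex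
    have hρmin : ∀ k, k < ρ → riskProc Y u (t + k) ω ≤ 0 := fun k hk => by
      have := Nat.find_min hex hk; omega
    have hρ1 : 1 ≤ ρ := by
      rcases Nat.eq_zero_or_pos ρ with h0 | h; · rw [h0] at hρpos; simp at hρpos; omega
      exact h
    have hρζ : ρ ≤ ζ := by
      obtain ⟨j, hj1, hj2⟩ := hP t
      exact le_trans (Nat.find_min' hex hj2) hj1
    have hr1 : riskProc Y u (t + ρ) ω = 1 := by
      have hpred : riskProc Y u (t + (ρ - 1)) ω ≤ 0 := hρmin _ (by omega)
      have hstep : riskProc Y u (t + (ρ - 1) + 1) ω ≤ riskProc Y u (t + (ρ - 1)) ω + 1 :=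
        riskProc_succ_le _
    
      have hidx : t + (ρ - 1) + 1 = t + ρ := by omega
      rw [hidx] at hstep
      omega
    have hshift : ∀ k, riskProc Y u (t + k) ω = -(z : ℤ) + riskProc (shiftY Y t) 0 k ω := by
      intro k; rw [riskProc_shift t k, hz]
    have hhit : hitTime (shiftY Y t) ((z : ℤ) + 1) ω = (ρ : ℕ∞) := by
      rw [hitTime_eq_coe_iff]
      refine ⟨⟨hρ1, ?_⟩, fun k hk1 hk2 => ?_⟩
      · have := hshift ρ; omega
      · have h1 := hρmin k hk2
        have h2 := hshift k
        omega
    have hzζ : z < ζ := by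
      have h1 := hshift ρ
      have h2 := riskProc_zero_le_self (Y := shiftY Y t) (ω := ω) ρ
      omega
    refine ⟨z, t, ρ, hzζ, hρ1, hρζ, hrt, hz, hhit, ?_⟩
    rw [parisian_eq_top_iff (by norm_num) hζ]
    intro a
    obtain ⟨j, hj1, hj2⟩ := hP (t + ρ + a)
    refine ⟨j, hj1, ?_⟩
    have hk : riskProc Y u (t + ρ + (a + j)) ω =
        riskProc Y u (t + ρ) ω + riskProc (shiftY Y (t + ρ)) 0 (a + j) ω :=
      riskProc_shift (t + ρ) (a + j)
    have hv : riskProc (shiftY Y (t + ρ)) 1 (a + j) ω =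
        1 + riskProc (shiftY Y (t + ρ)) 0 (a + j) ω := riskProc_eq_add 1 (a + j)
    have hidx : t + ρ + (a + j) = t + ρ + a + j := by omega
    rw [hidx] at hk
    omega
  · rintro (hR | ⟨z, t, ρ, hzζ, hρ1, hρζ, hrt, hz, hhit, hnp⟩)
    · intro a
      have := (ruinTime_eq_top_iff hu).1 hR a
      exact ⟨0, by omega, by simpa using this⟩
    obtain ⟨⟨ht1, ht2⟩, ht3⟩ := ruinTime_eq_coe_iff.1 hrt
    obtain ⟨⟨-, hh1⟩, hh2⟩ := hitTime_eq_coe_iff.1 hhit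
    have hpos : ∀ s, s < t → 0 < riskProc Y u s ω := by
      intro s hs
      rcases Nat.eq_zero_or_pos s with h0 | h
      · rw [h0, riskProc_zero]; omega
      · exact ht3 s h hs
    have hshift : ∀ k, riskProc Y u (t + k) ω = -(z : ℤ) + riskProc (shiftY Y t) 0 k ω := by
      intro k; rw [riskProc_shift t k, hz]
    have hr1 : riskProc Y u (t + ρ) ω = 1 := by have := hshift ρ; omega
    have hbelow : ∀ k, k < ρ → riskProc Y u (t + k) ω ≤ 0 := by
      intro k hk
      have hle : riskProc (shiftY Y t) 0 k ω ≤ ((z : ℤ) + 1) - 1 := by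
        apply riskProc_le_of_ne (by omega)
        intro m hm1 hm2
        exact hh2 m hm1 (by omega)
      have := hshift k
      omega
    have hnp' := (parisian_eq_top_iff (u := 1) le_rfl hζ).1 hnp
    intro a
    rcases lt_or_ge a t with hat | hat
    · exact ⟨0, by omega, by simpa using hpos a hat⟩
    rcases le_or_gt a (t + ρ) with haρ | haρ
    · refine ⟨t + ρ - a, by omega, ?_⟩
      have hidx : a + (t + ρ - a) = t + ρ := by omega
      rw [hidx, hr1]; omega
    · obtain ⟨j, hj1, hj2⟩ := hnp' (a - (t + ρ))
      refine ⟨j, hj1, ?_⟩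
      have hk : riskProc Y u (t + ρ + (a - (t + ρ) + j)) ω =
          riskProc Y u (t + ρ) ω + riskProc (shiftY Y (t + ρ)) 0 (a - (t + ρ) + j) ω :=
        riskProc_shift (t + ρ) _
      have hv : riskProc (shiftY Y (t + ρ)) 1 (a - (t + ρ) + j) ω =
          1 + riskProc (shiftY Y (t + ρ)) 0 (a - (t + ρ) + j) ω := riskProc_eq_add 1 _
      have hidx : t + ρ + (a - (t + ρ) + j) = a + j := by omega
      rw [hidx] at hk
      omega

/-! ### Path space machinery -/

instance pathMeasureSpace : MeasureSpace (ℕ → ℕ) :=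
  { toMeasurableSpace := inferInstance, volume := 0 }

/-- Coordinate process on path space. -/
def coordY : ℕ → (ℕ → ℕ) → ℕ := fun i f => f i

/-- Shift on path space. -/
def pshift (ρ : ℕ) (f : ℕ → ℕ) : ℕ → ℕ := fun i => f (ρ + i)

lemma measurable_pshift (ρ : ℕ) : Measurable (pshift ρ) :=
  measurable_pi_lambda _ fun i => measurable_pi_apply _

lemma measurable_riskProc_path (v : ℤ) (t : ℕ) :
    Measurable fun f : ℕ → ℕ => riskProc coordY v t f := by
  have h1 : Measurable fun f : ℕ → ℕ => aggClaims coordY t f := by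
    unfold aggClaims coordY
    exact Finset.measurable_sum _ fun i _ => measurable_pi_apply i
  unfold riskProc
  exact Measurable.sub measurable_const (measurable_from_top.comp h1)

lemma measurableSet_pi_finite {ι : Type*} [Finite ι] (C : Set (ι → ℕ)) :
    MeasurableSet C := by
  have hsing : ∀ v : ι → ℕ, MeasurableSet ({v} : Set (ι → ℕ)) := by
    intro v
    have : ({v} : Set (ι → ℕ)) = ⋂ i, (fun w : ι → ℕ => w i) ⁻¹' {v i} := by
      ext w
      simp [funext_iff]
    rw [this]
    exact MeasurableSet.iInter fun i => (measurable_pi_apply i) (measurableSet_singleton _)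
  have : C = ⋃ v ∈ C, {v} := by simp
  rw [this]
  exact MeasurableSet.biUnion C.to_countable fun v _ => hsing v

lemma measurableSet_hitPath (x : ℤ) (ρ : ℕ) :
    MeasurableSet {f : ℕ → ℕ | hitTime coordY x f = (ρ : ℕ∞)} := by
  have hb : MeasurableSet {f : ℕ → ℕ | 1 ≤ ρ ∧ riskProc coordY 0 ρ f = x} := by
    by_cases h1 : 1 ≤ ρ
    · have : {f : ℕ → ℕ | 1 ≤ ρ ∧ riskProc coordY 0 ρ f = x} =
          (fun f => riskProc coordY 0 ρ f) ⁻¹' {x} := by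
        ext f; simp [h1]
      rw [this]
      exact measurable_riskProc_path 0 ρ (measurableSet_singleton x)
    · have : {f : ℕ → ℕ | 1 ≤ ρ ∧ riskProc coordY 0 ρ f = x} = ∅ := by
        ext f; simp [h1]
      rw [this]; exact MeasurableSet.empty
  have h : {f : ℕ → ℕ | hitTime coordY x f = (ρ : ℕ∞)} =
      {f : ℕ → ℕ | 1 ≤ ρ ∧ riskProc coordY 0 ρ f = x} ∩
        ⋂ (k : ℕ), ⋂ (_ : 1 ≤ k ∧ k < ρ), {f : ℕ → ℕ | riskProc coordY 0 k f ≠ x} := by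
    ext f
    rw [Set.mem_inter_iff]
    simp only [Set.mem_iInter, Set.mem_setOf_eq, hitTime_eq_coe_iff]
    constructor
    · rintro ⟨h1, h2⟩; exact ⟨h1, fun k hk => h2 k hk.1 hk.2⟩
    · rintro ⟨h1, h2⟩; exact ⟨h1, fun k hk1 hk2 => h2 k ⟨hk1, hk2⟩⟩
  rw [h]
  exact hb.inter (MeasurableSet.iInter fun k => MeasurableSet.iInter fun _ =>
    (measurable_riskProc_path 0 k (measurableSet_singleton x)).compl)

lemma measurableSet_parisianPath {v : ℤ} (hv : 1 ≤ v) (hζ : 1 ≤ ζ) :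
    MeasurableSet {f : ℕ → ℕ | parisian coordY v ζ f = ⊤} := by
  have h : {f : ℕ → ℕ | parisian coordY v ζ f = ⊤} =
      ⋂ (a : ℕ), ⋃ (j : ℕ), ⋃ (_ : j ≤ ζ),
        {f : ℕ → ℕ | 0 < riskProc coordY v (a + j) f} := by
    ext f
    simp only [Set.mem_iInter, Set.mem_iUnion, Set.mem_setOf_eq,
      parisian_eq_top_iff hv hζ]
    constructor
    · intro h a; obtain ⟨j, hj1, hj2⟩ := h a; exact ⟨j, hj1, hj2⟩
    · intro h a; obtain ⟨j, hj1, hj2⟩ := h a; exact ⟨j, hj1, hj2⟩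
  rw [h]
  refine MeasurableSet.iInter fun a => MeasurableSet.iUnion fun j =>
    MeasurableSet.iUnion fun _ => ?_
  have : {f : ℕ → ℕ | 0 < riskProc coordY v (a + j) f} =
      (fun f => riskProc coordY v (a + j) f) ⁻¹' {y : ℤ | 0 < y} := rfl
  rw [this]
  exact measurable_riskProc_path v (a + j) (measurableSet_Ioi (a := (0:ℤ)))

lemma measurableSet_ruinPath_eq (v : ℤ) (t : ℕ) :
    MeasurableSet {f : ℕ → ℕ | ruinTime coordY v f = (t : ℕ∞)} := by
  have hb : MeasurableSet {f : ℕ → ℕ | 1 ≤ t ∧ riskProc coordY v t f ≤ 0} := by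
    by_cases h1 : 1 ≤ t
    · have : {f : ℕ → ℕ | 1 ≤ t ∧ riskProc coordY v t f ≤ 0} =
          (fun f => riskProc coordY v t f) ⁻¹' {y : ℤ | y ≤ 0} := by
        ext f; simp [h1]
      rw [this]
      exact measurable_riskProc_path v t (measurableSet_Iic (a := (0:ℤ)))
    · have : {f : ℕ → ℕ | 1 ≤ t ∧ riskProc coordY v t f ≤ 0} = ∅ := by
        ext f; simp [h1]
      rw [this]; exact MeasurableSet.empty
  have h : {f : ℕ → ℕ | ruinTime coordY v f = (t : ℕ∞)} =
      {f : ℕ → ℕ | 1 ≤ t ∧ riskProc coordY v t f ≤ 0} ∩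
        ⋂ (k : ℕ), ⋂ (_ : 1 ≤ k ∧ k < t), {f : ℕ → ℕ | 0 < riskProc coordY v k f} := by
    ext f
    rw [Set.mem_inter_iff]
    simp only [Set.mem_iInter, Set.mem_setOf_eq, ruinTime_eq_coe_iff]
    constructor
    · rintro ⟨h1, h2⟩; exact ⟨h1, fun k hk => h2 k hk.1 hk.2⟩
    · rintro ⟨h1, h2⟩; exact ⟨h1, fun k hk1 hk2 => h2 k ⟨hk1, hk2⟩⟩
  rw [h]
  exact hb.inter (MeasurableSet.iInter fun k => MeasurableSet.iInter fun _ =>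
    measurable_riskProc_path v k (measurableSet_Ioi (a := (0:ℤ))))

lemma measurableSet_ruinPath_top (v : ℤ) :
    MeasurableSet {f : ℕ → ℕ | ruinTime coordY v f = ⊤} := by
  have h : {f : ℕ → ℕ | ruinTime coordY v f = ⊤} =
      ⋂ (s : ℕ), ⋂ (_ : 1 ≤ s), {f : ℕ → ℕ | ¬ riskProc coordY v s f ≤ 0} := by
    ext f
    rw [Set.mem_setOf_eq, ruinTime, sInf_image_eq_top_iff, Set.eq_empty_iff_forall_notMem]
    simp only [Set.mem_iInter, Set.mem_setOf_eq]
    constructor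
    · intro h s hs hc; exact h s ⟨hs, hc⟩
    · rintro h s ⟨hs, hc⟩; exact h s hs hc
  rw [h]
  refine MeasurableSet.iInter fun s => MeasurableSet.iInter fun _ => ?_
  exact (measurable_riskProc_path v s (measurableSet_Iic (a := (0:ℤ)))).compl

lemma measurable_pi_lambda' {α : Type*} {m : MeasurableSpace α} {δ : Type*} {π : δ → Type*}
    [∀ a, MeasurableSpace (π a)] (f : α → ∀ a, π a)
    (hf : ∀ a, @Measurable α (π a) m _ fun c => f c a) :
    @Measurable α (∀ a, π a) m _ f := by
  letI := m
  exact measurable_pi_lambda f hf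

/-! ### Shift invariance and independence factorization -/

/-- The sequence of claims from time `s` on, as a path-space valued map. -/
def XY (Y : ℕ → Ω → ℕ) (s : ℕ) : Ω → (ℕ → ℕ) := fun ω i => Y (s + i) ω

lemma measurable_XY (hY : ∀ i, Measurable (Y i)) (s : ℕ) : Measurable (XY Y s) :=
  measurable_pi_lambda _ fun i => hY (s + i)

lemma XY_apply (s : ℕ) (ω : Ω) : XY Y s ω = fun i => Y (s + i) ω := rfl

section Shift

variable [IsProbabilityMeasure (ℙ : Measure Ω)]
  (hY : ∀ i, Measurable (Y i))
  (hindep : iIndepFun Y ℙ)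
  (hid : ∀ i, IdentDistrib (Y i) (Y 0) ℙ ℙ)

include hY hindep hid in
/-- Shift invariance of the law of the claims sequence. -/
lemma map_XY_eq (s : ℕ) : Measure.map (XY Y s) ℙ = Measure.map (XY Y 0) ℙ := by
  have hprob : ∀ k, IsProbabilityMeasure (Measure.map (XY Y k) ℙ) := fun k =>
    Measure.isProbabilityMeasure_map (measurable_XY hY k).aemeasurable
  have h0 := hprob 0
  have hs := hprob s
  -- key: measure of a fiber of finitely many coordinates
  have key : ∀ (k : ℕ) (I : Finset ℕ) (c : ℕ → ℕ),
      ℙ (⋂ j ∈ I, (Y (k + j)) ⁻¹' {c j}) = ∏ j ∈ I, ℙ ((Y 0) ⁻¹' {c j}) := by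
    intro k I c
    have hinj : Function.Injective (fun j : ℕ => k + j) := fun a b h => Nat.add_left_cancel h
    have hre : (⋂ j ∈ I, (Y (k + j)) ⁻¹' {c j}) =
        ⋂ m ∈ I.image (fun j => k + j), (Y m) ⁻¹' {c (m - k)} := by
      ext ω
      simp only [Set.mem_iInter, Finset.mem_image]
      constructor
      · rintro h m ⟨j, hj, rfl⟩
        have : k + j - k = j := by omega
        rw [this]
        exact h j hj
      · intro h j hj
        have := h (k + j) ⟨j, hj, rfl⟩
        have h2 : k + j - k = j := by omega
        rwa [h2] at this
    rw [hre]
    rw [hindep.meas_biInter (fun m _ => ⟨{c (m - k)}, measurableSet_singleton _, rfl⟩)]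
    rw [Finset.prod_image (fun a _ b _ h => hinj h)]
    refine Finset.prod_congr rfl fun j _ => ?_
    have h2 : k + j - k = j := by omega
    rw [h2]
    exact (hid (k + j)).measure_mem_eq (measurableSet_singleton _)
  -- reduce to cylinders
  refine ext_of_generate_finite (measurableCylinders fun _ : ℕ => ℕ)
    generateFrom_measurableCylinders.symm isPiSystem_measurableCylinders
    (fun T hT => ?_) (by simp)
  obtain ⟨I, S, hS, rfl⟩ := (mem_measurableCylinders T).1 hT
  have hcylm : MeasurableSet (cylinder I S) :=
    MeasurableSet.of_mem_measurableCylinders (α := fun _ : ℕ => ℕ) hT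
  have hWeq : ∀ k, XY Y k ⁻¹' cylinder I S =
      (fun ω (i : I) => Y (k + i) ω) ⁻¹' S := by
    intro k
    ext ω
    simp only [Set.mem_preimage, cylinder, Finset.restrict]
    rfl
  have hWmeas : ∀ k, Measurable (fun ω (i : I) => Y (k + (i : ℕ)) ω) := fun k =>
    measurable_pi_lambda _ fun i => hY (k + i)
  have hfiber : ∀ k, ℙ ((fun ω (i : I) => Y (k + (i : ℕ)) ω) ⁻¹' S) =
      ℙ ((fun ω (i : I) => Y (0 + (i : ℕ)) ω) ⁻¹' S) := by
    intro k
    have hmapeq : Measure.map (fun ω (i : I) => Y (k + (i : ℕ)) ω) ℙ =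
        Measure.map (fun ω (i : I) => Y (0 + (i : ℕ)) ω) ℙ := by
      apply Measure.ext_of_singleton
      intro a
      have hsing : MeasurableSet ({a} : Set ((i : I) → ℕ)) := measurableSet_pi_finite _
      rw [Measure.map_apply (hWmeas k) hsing, Measure.map_apply (hWmeas 0) hsing]
      classical
      have hset : ∀ k', (fun ω (i : I) => Y (k' + (i : ℕ)) ω) ⁻¹' {a} =
          ⋂ j ∈ I, (Y (k' + j)) ⁻¹' {if h : j ∈ I then a ⟨j, h⟩ else 0} := by
        intro k'
        ext ω
        simp only [Set.mem_preimage, Set.mem_singleton_iff, Set.mem_iInter, funext_iff]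
        constructor
        · intro h j hj
          simp only [hj, dif_pos]
          exact h ⟨j, hj⟩
        · intro h i
          have := h i i.2
          simpa [i.2] using this
      rw [hset k, hset 0, key k I _, key 0 I _]
    rw [← Measure.map_apply (hWmeas k) (measurableSet_pi_finite S),
      ← Measure.map_apply (hWmeas 0) (measurableSet_pi_finite S), hmapeq]
  rw [Measure.map_apply (measurable_XY hY s) hcylm,
    Measure.map_apply (measurable_XY hY 0) hcylm, hWeq s, hWeq 0, hfiber s]

include hY hindep in
/-- Factorization of the probability of an event depending on the first `s` claims and an
event depending on the claims from time `s` on. -/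
lemma factor_meas (s : ℕ) (C : Set ((i : Fin s) → ℕ)) {D : Set (ℕ → ℕ)}
    (hD : MeasurableSet D) :
    ℙ ((fun ω (i : Fin s) => Y i ω) ⁻¹' C ∩ XY Y s ⁻¹' D) =
      ℙ ((fun ω (i : Fin s) => Y i ω) ⁻¹' C) * ℙ (XY Y s ⁻¹' D) := by
  have h_le : ∀ n, MeasurableSpace.comap (Y n) inferInstance ≤
      (inferInstance : MeasurableSpace Ω) := fun n => (hY n).comap_le
  have hInd := indep_biSup_compl h_le hindep.iIndep {i : ℕ | i < s}
  have h1 : MeasurableSet[⨆ i ∈ {i : ℕ | i < s}, MeasurableSpace.comap (Y i) inferInstance]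
      ((fun ω (i : Fin s) => Y i ω) ⁻¹' C) := by
    have hV : Measurable[⨆ i ∈ {i : ℕ | i < s}, MeasurableSpace.comap (Y i) inferInstance]
        (fun ω (i : Fin s) => Y i ω) := by
      apply measurable_pi_lambda'
      intro i
      have hle : MeasurableSpace.comap (Y (i : ℕ)) inferInstance ≤
          ⨆ i ∈ {i : ℕ | i < s}, MeasurableSpace.comap (Y i) inferInstance :=
        le_biSup (f := fun i : ℕ => MeasurableSpace.comap (Y i) inferInstance)
          (show (i : ℕ) ∈ {i : ℕ | i < s} from i.2)
      exact Measurable.mono (f := Y (i : ℕ)) (comap_measurable _) hle le_rfl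
    exact hV (measurableSet_pi_finite C)
  have h2 : MeasurableSet[⨆ i ∈ {i : ℕ | i < s}ᶜ, MeasurableSpace.comap (Y i) inferInstance]
      (XY Y s ⁻¹' D) := by
    have hX : Measurable[⨆ i ∈ {i : ℕ | i < s}ᶜ, MeasurableSpace.comap (Y i) inferInstance]
        (XY Y s) := by
      apply measurable_pi_lambda'
      intro i
      have hle : MeasurableSpace.comap (Y (s + i)) inferInstance ≤
          ⨆ i ∈ {i : ℕ | i < s}ᶜ, MeasurableSpace.comap (Y i) inferInstance :=
        le_biSup (f := fun i : ℕ => MeasurableSpace.comap (Y i) inferInstance)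
          (show (s + i) ∈ {i : ℕ | i < s}ᶜ by simp)
      exact Measurable.mono (f := Y (s + i)) (comap_measurable _) hle le_rfl
    exact hX hD
  exact (Indep_iff _ _ _).1 hInd _ _ h1 h2

end Shift

/-! ### Transfer between `Ω` and path space -/

lemma shiftY_zero : shiftY Y 0 = Y := by
  funext i ω; simp [shiftY]

lemma shiftY_shiftY (t ρ : ℕ) : shiftY (shiftY Y t) ρ = shiftY Y (t + ρ) := by
  funext i ω; simp [shiftY, add_assoc]

lemma ruinTime_transfer (t : ℕ) (v : ℤ) (ω : Ω) :
    ruinTime (shiftY Y t) v ω = ruinTime coordY v (XY Y t ω) := rfl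

lemma hitTime_transfer (t : ℕ) (x : ℤ) (ω : Ω) :
    hitTime (shiftY Y t) x ω = hitTime coordY x (XY Y t ω) := rfl

lemma parisian_transfer (t : ℕ) (v : ℤ) (ζ : ℕ) (ω : Ω) :
    parisian (shiftY Y t) v ζ ω = parisian coordY v ζ (XY Y t ω) := rfl

lemma pshift_XY (t ρ : ℕ) (ω : Ω) : pshift ρ (XY Y t ω) = XY (shiftY Y t) ρ ω := rfl

lemma XY_shiftY (t ρ : ℕ) : XY (shiftY Y t) ρ = XY Y (t + ρ) := by
  funext ω i; simp [XY, shiftY, add_assoc]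

/-! ### Congruence lemmas: events depending only on finitely many claims -/

lemma riskProc_path_congr {f g : ℕ → ℕ} {k n : ℕ} (hnk : n ≤ k)
    (h : ∀ i, i < k → f i = g i) (v : ℤ) :
    riskProc coordY v n f = riskProc coordY v n g := by
  unfold riskProc aggClaims coordY
  have : ∑ i ∈ Finset.range n, f i = ∑ i ∈ Finset.range n, g i :=
    Finset.sum_congr rfl fun i hi => h i (lt_of_lt_of_le (Finset.mem_range.1 hi) hnk)
  rw [this]

lemma hitTime_eq_path_congr {f g : ℕ → ℕ} {ρ : ℕ} {x : ℤ}
    (h : ∀ i, i < ρ → f i = g i) :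
    hitTime coordY x f = (ρ : ℕ∞) ↔ hitTime coordY x g = (ρ : ℕ∞) := by
  rw [hitTime_eq_coe_iff, hitTime_eq_coe_iff]
  constructor
  · rintro ⟨⟨h1, h2⟩, h3⟩
    refine ⟨⟨h1, by rw [← riskProc_path_congr le_rfl h 0]; exact h2⟩, fun k hk1 hk2 => ?_⟩
    rw [← riskProc_path_congr hk2.le h 0]
    exact h3 k hk1 hk2
  · rintro ⟨⟨h1, h2⟩, h3⟩
    refine ⟨⟨h1, by rw [riskProc_path_congr le_rfl h 0]; exact h2⟩, fun k hk1 hk2 => ?_⟩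
    rw [riskProc_path_congr hk2.le h 0]
    exact h3 k hk1 hk2

lemma ruinTime_eq_path_congr {f g : ℕ → ℕ} {t : ℕ} {v : ℤ}
    (h : ∀ i, i < t → f i = g i) :
    ruinTime coordY v f = (t : ℕ∞) ↔ ruinTime coordY v g = (t : ℕ∞) := by
  rw [ruinTime_eq_coe_iff, ruinTime_eq_coe_iff]
  constructor
  · rintro ⟨⟨h1, h2⟩, h3⟩
    refine ⟨⟨h1, by rw [← riskProc_path_congr le_rfl h v]; exact h2⟩, fun k hk1 hk2 => ?_⟩
    rw [← riskProc_path_congr hk2.le h v]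
    exact h3 k hk1 hk2
  · rintro ⟨⟨h1, h2⟩, h3⟩
    refine ⟨⟨h1, by rw [riskProc_path_congr le_rfl h v]; exact h2⟩, fun k hk1 hk2 => ?_⟩
    rw [riskProc_path_congr hk2.le h v]
    exact h3 k hk1 hk2

/-- Extension of a finite vector of claims by zero. -/
def fext (t : ℕ) (v : Fin t → ℕ) : ℕ → ℕ := fun i => if h : i < t then v ⟨i, h⟩ else 0

lemma fext_agree (t : ℕ) (f : ℕ → ℕ) : ∀ i, i < t → fext t (fun j : Fin t => f j) i = f i := by
  intro i hi; simp [fext, hi]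

/-! ### Measurability of the events on `Ω` -/

lemma measurable_riskProc_omega (hY : ∀ i, Measurable (Y i)) (v : ℤ) (t : ℕ) :
    Measurable fun ω => riskProc Y v t ω := by
  have h1 : Measurable fun ω => aggClaims Y t ω := by
    unfold aggClaims
    exact Finset.measurable_sum _ fun i _ => hY i
  unfold riskProc
  exact Measurable.sub measurable_const (measurable_from_top.comp h1)

lemma ruinTop_eq_preimage (v : ℤ) :
    {ω : Ω | ruinTime Y v ω = ⊤} = XY Y 0 ⁻¹' {f | ruinTime coordY v f = ⊤} := by
  ext ω
  rw [Set.mem_preimage, Set.mem_setOf_eq, Set.mem_setOf_eq, ← ruinTime_transfer, shiftY_zero]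

lemma ruinEq_eq_preimage (v : ℤ) (t : ℕ) :
    {ω : Ω | ruinTime Y v ω = (t : ℕ∞)} = XY Y 0 ⁻¹' {f | ruinTime coordY v f = (t : ℕ∞)} := by
  ext ω
  rw [Set.mem_preimage, Set.mem_setOf_eq, Set.mem_setOf_eq, ← ruinTime_transfer, shiftY_zero]

lemma hitEq_eq_preimage (t : ℕ) (x : ℤ) (ρ : ℕ) :
    {ω : Ω | hitTime (shiftY Y t) x ω = (ρ : ℕ∞)} =
      XY Y t ⁻¹' {f | hitTime coordY x f = (ρ : ℕ∞)} := rfl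

lemma parisTop_eq_preimage (t : ℕ) (ζ : ℕ) :
    {ω : Ω | parisian (shiftY Y t) 1 ζ ω = ⊤} =
      XY Y t ⁻¹' {f | parisian coordY 1 ζ f = ⊤} := rfl

lemma ruinTime_eval (v : ℤ) (ω : Ω) :
    ruinTime coordY v (fun i => Y i ω) = ruinTime Y v ω := rfl

lemma riskProc_eval (v : ℤ) (n : ℕ) (ω : Ω) :
    riskProc coordY v n (fun i => Y i ω) = riskProc Y v n ω := rfl

lemma parisian_pshift (t ρ ζ : ℕ) (ω : Ω) :
    parisian coordY 1 ζ (pshift ρ (XY Y t ω)) = parisian (shiftY Y (t + ρ)) 1 ζ ω := by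
  rw [show pshift ρ (XY Y t ω) = XY Y (t + ρ) ω from by rw [pshift_XY, XY_shiftY],
    ← parisian_transfer]

/-! ### The master identity -/

/-- Event: first ruin at `t` with deficit `z`, return to `1` after `ρ` more steps, and no
Parisian ruin afterwards. -/
def Wset (Y : ℕ → Ω → ℕ) (u : ℤ) (ζ : ℕ) (p : ℕ × ℕ × ℕ) : Set Ω :=
  {ω | (p.1 < ζ ∧ 1 ≤ p.2.2 ∧ p.2.2 ≤ ζ) ∧
    (ruinTime Y u ω = (p.2.1 : ℕ∞) ∧ riskProc Y u p.2.1 ω = -(p.1 : ℤ)) ∧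
    hitTime (shiftY Y p.2.1) ((p.1 : ℤ) + 1) ω = (p.2.2 : ℕ∞) ∧
    parisian (shiftY Y (p.2.1 + p.2.2)) 1 ζ ω = ⊤}

lemma NP_eq_union (hu : 1 ≤ u) (hζ : 1 ≤ ζ) :
    {ω : Ω | parisian Y u ζ ω = ⊤} =
      {ω : Ω | ruinTime Y u ω = ⊤} ∪ ⋃ (p : ℕ × ℕ × ℕ), Wset Y u ζ p := by
  ext ω
  simp only [Set.mem_setOf_eq, Set.mem_union, Set.mem_iUnion, Wset]
  rw [parisian_decomp hu hζ]
  constructor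
  · rintro (h | ⟨z, t, ρ, h1, h2, h3, h4, h5, h6, h7⟩)
    · exact Or.inl h
    · exact Or.inr ⟨⟨z, t, ρ⟩, ⟨h1, h2, h3⟩, ⟨h4, h5⟩, h6, h7⟩
  · rintro (h | ⟨⟨z, t, ρ⟩, ⟨h1, h2, h3⟩, ⟨h4, h5⟩, h6, h7⟩)
    · exact Or.inl h
    · exact Or.inr ⟨z, t, ρ, h1, h2, h3, h4, h5, h6, h7⟩

section Master

variable [IsProbabilityMeasure (ℙ : Measure Ω)]
  (hY : ∀ i, Measurable (Y i))
  (hindep : iIndepFun Y ℙ)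
  (hid : ∀ i, IdentDistrib (Y i) (Y 0) ℙ ℙ)

include hY in
lemma measurableSet_ruinTop : MeasurableSet {ω : Ω | ruinTime Y u ω = ⊤} := by
  rw [ruinTop_eq_preimage]
  exact measurable_XY hY 0 (measurableSet_ruinPath_top u)

include hY in
lemma measurableSet_ruinEq (t : ℕ) : MeasurableSet {ω : Ω | ruinTime Y u ω = (t : ℕ∞)} := by
  rw [ruinEq_eq_preimage]
  exact measurable_XY hY 0 (measurableSet_ruinPath_eq u t)

include hY in
lemma measurableSet_E (t z : ℕ) :
    MeasurableSet {ω : Ω | ruinTime Y u ω = (t : ℕ∞) ∧ riskProc Y u t ω = -(z : ℤ)} := by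
  have h : {ω : Ω | ruinTime Y u ω = (t : ℕ∞) ∧ riskProc Y u t ω = -(z : ℤ)} =
      {ω : Ω | ruinTime Y u ω = (t : ℕ∞)} ∩
        (fun ω => riskProc Y u t ω) ⁻¹' {-(z : ℤ)} := rfl
  rw [h]
  exact (measurableSet_ruinEq hY t).inter
    (measurable_riskProc_omega hY u t (measurableSet_singleton _))

include hY in
lemma measurableSet_W (hζ : 1 ≤ ζ) (p : ℕ × ℕ × ℕ) : MeasurableSet (Wset Y u ζ p) := by
  obtain ⟨z, t, ρ⟩ := p
  by_cases hC : z < ζ ∧ 1 ≤ ρ ∧ ρ ≤ ζ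
  · have h : Wset Y u ζ (z, t, ρ) =
        ({ω : Ω | ruinTime Y u ω = (t : ℕ∞) ∧ riskProc Y u t ω = -(z : ℤ)} ∩
          (XY Y t ⁻¹' {f | hitTime coordY ((z : ℤ) + 1) f = (ρ : ℕ∞)} ∩
            XY Y (t + ρ) ⁻¹' {f | parisian coordY 1 ζ f = ⊤})) := by
      ext ω
      simp only [Wset, Set.mem_setOf_eq, Set.mem_inter_iff, Set.mem_preimage, hC, true_and]
      rw [← hitTime_transfer, ← parisian_transfer]
    rw [h]
    exact (measurableSet_E hY t z).inter
      ((measurable_XY hY t (measurableSet_hitPath _ _)).inter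
        (measurable_XY hY (t + ρ) (measurableSet_parisianPath le_rfl hζ)))
  · have h : Wset Y u ζ (z, t, ρ) = ∅ := by
      ext ω; simp only [Wset, Set.mem_setOf_eq, Set.mem_empty_iff_false, iff_false]
      tauto
    rw [h]; exact MeasurableSet.empty

include hY hindep hid in
lemma measure_Wset (hζ : 1 ≤ ζ) (z t ρ : ℕ) :
    ℙ (Wset Y u ζ (z, t, ρ)) =
      if z < ζ ∧ 1 ≤ ρ ∧ ρ ≤ ζ then
        ℙ {ω : Ω | ruinTime Y u ω = (t : ℕ∞) ∧ riskProc Y u t ω = -(z : ℤ)} *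
          (ℙ {ω : Ω | hitTime Y ((z : ℤ) + 1) ω = (ρ : ℕ∞)} *
            ℙ {ω : Ω | parisian Y 1 ζ ω = ⊤}) else 0 := by
  by_cases hC : z < ζ ∧ 1 ≤ ρ ∧ ρ ≤ ζ
  swap
  · rw [if_neg hC]
    have h : Wset Y u ζ (z, t, ρ) = ∅ := by
      ext ω; simp only [Wset, Set.mem_setOf_eq, Set.mem_empty_iff_false, iff_false]
      tauto
    rw [h]; exact measure_empty
  rw [if_pos hC]
  classical
  -- the path-space event describing the future after time t
  set Ppath : Set (ℕ → ℕ) := {f | parisian coordY 1 ζ f = ⊤} with hPpath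
  set Dset : Set (ℕ → ℕ) :=
    {f | hitTime coordY ((z : ℤ) + 1) f = (ρ : ℕ∞)} ∩ pshift ρ ⁻¹' Ppath with hDset
  have hDmeas : MeasurableSet Dset :=
    (measurableSet_hitPath _ _).inter ((measurable_pshift ρ) (measurableSet_parisianPath le_rfl hζ))
  have hPmeas : MeasurableSet Ppath := measurableSet_parisianPath le_rfl hζ
  -- Step 1: W = E ∩ XY t ⁻¹' D
  have hW : Wset Y u ζ (z, t, ρ) =
      {ω : Ω | ruinTime Y u ω = (t : ℕ∞) ∧ riskProc Y u t ω = -(z : ℤ)} ∩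
        XY Y t ⁻¹' Dset := by
    ext ω
    have e1 : hitTime coordY ((z : ℤ) + 1) (XY Y t ω) = hitTime (shiftY Y t) ((z : ℤ) + 1) ω :=
      (hitTime_transfer t _ ω).symm
    have e2 : parisian coordY 1 ζ (pshift ρ (XY Y t ω)) = parisian (shiftY Y (t + ρ)) 1 ζ ω :=
      parisian_pshift t ρ ζ ω
    simp only [Wset, Set.mem_setOf_eq, Set.mem_inter_iff, Set.mem_preimage, hC, true_and,
      hDset, hPpath, e1, e2]
  -- Step 2: E as an event of the first t claims
  set Cset : Set (Fin t → ℕ) :=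
    {v | ruinTime coordY u (fext t v) = (t : ℕ∞) ∧
      riskProc coordY u t (fext t v) = -(z : ℤ)} with hCset
  have hE : {ω : Ω | ruinTime Y u ω = (t : ℕ∞) ∧ riskProc Y u t ω = -(z : ℤ)} =
      (fun ω (i : Fin t) => Y i ω) ⁻¹' Cset := by
    ext ω
    have hagree : ∀ i, i < t → fext t (fun j : Fin t => Y j ω) i = (fun i => Y i ω) i :=
      fext_agree t (fun i => Y i ω)
    simp only [Set.mem_setOf_eq, Set.mem_preimage, hCset]
    constructor
    · rintro ⟨h1, h2⟩
      have h1' : ruinTime coordY u (fun i => Y i ω) = (t : ℕ∞) := by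
        rw [ruinTime_eval]; exact h1
      have h2' : riskProc coordY u t (fun i => Y i ω) = -(z : ℤ) := by
        rw [riskProc_eval]; exact h2
      exact ⟨(ruinTime_eq_path_congr hagree).2 h1',
        by rw [riskProc_path_congr le_rfl hagree u]; exact h2'⟩
    · rintro ⟨h1, h2⟩
      have h1' := (ruinTime_eq_path_congr hagree).1 h1
      have h2' : riskProc coordY u t (fun i => Y i ω) = -(z : ℤ) := by
        rw [← riskProc_path_congr le_rfl hagree u]; exact h2
      exact ⟨by rw [← ruinTime_eval]; exact h1', by rw [← riskProc_eval]; exact h2'⟩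
  -- Step 3: factorize at time t
  have hfac1 : ℙ (Wset Y u ζ (z, t, ρ)) =
      ℙ {ω : Ω | ruinTime Y u ω = (t : ℕ∞) ∧ riskProc Y u t ω = -(z : ℤ)} *
        ℙ (XY Y t ⁻¹' Dset) := by
    rw [hW, hE]
    exact factor_meas hY hindep t Cset hDmeas
  -- Step 4: shift invariance at time t
  have hshift1 : ℙ (XY Y t ⁻¹' Dset) = ℙ (XY Y 0 ⁻¹' Dset) := by
    rw [← Measure.map_apply (measurable_XY hY t) hDmeas,
      ← Measure.map_apply (measurable_XY hY 0) hDmeas, map_XY_eq hY hindep hid t]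
  -- Step 5: identify XY 0 ⁻¹' D
  have hD0 : XY Y 0 ⁻¹' Dset =
      {ω : Ω | hitTime Y ((z : ℤ) + 1) ω = (ρ : ℕ∞)} ∩ XY Y ρ ⁻¹' Ppath := by
    ext ω
    have e1 : hitTime coordY ((z : ℤ) + 1) (XY Y 0 ω) = hitTime Y ((z : ℤ) + 1) ω := by
      rw [← hitTime_transfer, shiftY_zero]
    have e2 : pshift ρ (XY Y 0 ω) = XY Y ρ ω := by
      rw [pshift_XY, shiftY_zero]
    simp only [Set.mem_preimage, Set.mem_inter_iff, Set.mem_setOf_eq, hDset, e1, e2]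
  -- Step 6: hit event as an event of the first ρ claims
  set C2 : Set (Fin ρ → ℕ) :=
    {v | hitTime coordY ((z : ℤ) + 1) (fext ρ v) = (ρ : ℕ∞)} with hC2
  have hHit : {ω : Ω | hitTime Y ((z : ℤ) + 1) ω = (ρ : ℕ∞)} =
      (fun ω (i : Fin ρ) => Y i ω) ⁻¹' C2 := by
    ext ω
    have hagree : ∀ i, i < ρ → fext ρ (fun j : Fin ρ => Y j ω) i = (fun i => Y i ω) i :=
      fext_agree ρ (fun i => Y i ω)
    simp only [Set.mem_setOf_eq, Set.mem_preimage, hC2]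
    exact (hitTime_eq_path_congr hagree).symm
  have hfac2 : ℙ ({ω : Ω | hitTime Y ((z : ℤ) + 1) ω = (ρ : ℕ∞)} ∩ XY Y ρ ⁻¹' Ppath) =
      ℙ {ω : Ω | hitTime Y ((z : ℤ) + 1) ω = (ρ : ℕ∞)} * ℙ (XY Y ρ ⁻¹' Ppath) := by
    rw [hHit]
    exact factor_meas hY hindep ρ C2 hPmeas
  have hshift2 : ℙ (XY Y ρ ⁻¹' Ppath) = ℙ (XY Y 0 ⁻¹' Ppath) := by
    rw [← Measure.map_apply (measurable_XY hY ρ) hPmeas,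
      ← Measure.map_apply (measurable_XY hY 0) hPmeas, map_XY_eq hY hindep hid ρ]
  have hP0 : XY Y 0 ⁻¹' Ppath = {ω : Ω | parisian Y 1 ζ ω = ⊤} := by
    have := parisTop_eq_preimage (Y := Y) 0 ζ
    rw [shiftY_zero] at this
    exact this.symm
  rw [hfac1, hshift1, hD0, hfac2, hshift2, hP0]

include hY in
lemma measurableSet_hitEq_omega (x : ℤ) (ρ : ℕ) :
    MeasurableSet {ω : Ω | hitTime Y x ω = (ρ : ℕ∞)} := by
  have h := hitEq_eq_preimage (Y := Y) 0 x ρ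
  rw [shiftY_zero] at h
  rw [h]
  exact measurable_XY hY 0 (measurableSet_hitPath x ρ)

include hY in
lemma measurableSet_parisTop_omega {v : ℤ} (hv : 1 ≤ v) (hζ : 1 ≤ ζ) :
    MeasurableSet {ω : Ω | parisian Y v ζ ω = ⊤} := by
  have h : {ω : Ω | parisian (shiftY Y 0) v ζ ω = ⊤} =
      XY Y 0 ⁻¹' {f | parisian coordY v ζ f = ⊤} := rfl
  rw [shiftY_zero] at h
  rw [h]
  exact measurable_XY hY 0 (measurableSet_parisianPath hv hζ)

include hY in
lemma measure_hitLe (x : ℤ) (hζ : 1 ≤ ζ) :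
    ℙ {ω : Ω | hitTime Y x ω ≤ (ζ : ℕ∞)} =
      ∑ ρ ∈ Finset.Icc 1 ζ, ℙ {ω : Ω | hitTime Y x ω = (ρ : ℕ∞)} := by
  have hset : {ω : Ω | hitTime Y x ω ≤ (ζ : ℕ∞)} =
      ⋃ ρ ∈ Finset.Icc 1 ζ, {ω : Ω | hitTime Y x ω = (ρ : ℕ∞)} := by
    ext ω
    simp only [Set.mem_setOf_eq, Set.mem_iUnion, Finset.mem_Icc]
    constructor
    · intro h
      have hne : {n : ℕ | 1 ≤ n ∧ riskProc Y 0 n ω = x}.Nonempty := by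
        obtain ⟨n, h1, h2, h3⟩ := hitTime_le_coe_iff.1 h
        exact ⟨n, h1, h3⟩
      have heq : hitTime Y x ω = ((sInf {n : ℕ | 1 ≤ n ∧ riskProc Y 0 n ω = x} : ℕ) : ℕ∞) := by
        rw [hitTime, sInf_image_of_nonempty hne]
      refine ⟨sInf {n : ℕ | 1 ≤ n ∧ riskProc Y 0 n ω = x},
        ⟨(Nat.sInf_mem hne).1, ?_⟩, heq⟩
      rw [heq] at h
      exact_mod_cast h
    · rintro ⟨ρ, ⟨h1, h2⟩, h3⟩
      rw [h3]
      exact_mod_cast h2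
  rw [hset]
  rw [measure_biUnion_finset ?hd fun ρ _ => measurableSet_hitEq_omega hY x ρ]
  intro ρ hρ ρ' hρ' hne
  simp only [Function.onFun]
  rw [Set.disjoint_left]
  intro ω h1 h2
  simp only [Set.mem_setOf_eq] at h1 h2
  rw [h1] at h2
  exact hne (by exact_mod_cast h2)

include hY in
lemma measure_deficit (z : ℕ) :
    ℙ {ω : Ω | ∃ s : ℕ, ruinTime Y u ω = (s : ℕ∞) ∧ riskProc Y u s ω = -(z : ℤ)} =
      ∑' t : ℕ, ℙ {ω : Ω | ruinTime Y u ω = (t : ℕ∞) ∧ riskProc Y u t ω = -(z : ℤ)} := by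
  have hset : {ω : Ω | ∃ s : ℕ, ruinTime Y u ω = (s : ℕ∞) ∧ riskProc Y u s ω = -(z : ℤ)} =
      ⋃ t : ℕ, {ω : Ω | ruinTime Y u ω = (t : ℕ∞) ∧ riskProc Y u t ω = -(z : ℤ)} := by
    ext ω; simp only [Set.mem_setOf_eq, Set.mem_iUnion]
  rw [hset]
  rw [measure_iUnion ?hd fun t => measurableSet_E hY t z]
  intro t t' hne
  simp only [Function.onFun]
  rw [Set.disjoint_left]
  rintro ω ⟨h1, -⟩ ⟨h2, -⟩
  rw [h1] at h2
  exact hne (by exact_mod_cast h2)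

include hY hindep hid in
lemma master (hu : 1 ≤ u) (hζ : 1 ≤ ζ) :
    ℙ {ω : Ω | parisian Y u ζ ω = ⊤} =
      ℙ {ω : Ω | ruinTime Y u ω = ⊤} +
        (∑ z ∈ Finset.range ζ,
          ℙ {ω : Ω | ∃ s : ℕ, ruinTime Y u ω = (s : ℕ∞) ∧ riskProc Y u s ω = -(z : ℤ)} *
            ℙ {ω : Ω | hitTime Y ((z : ℤ) + 1) ω ≤ (ζ : ℕ∞)}) *
          ℙ {ω : Ω | parisian Y 1 ζ ω = ⊤} := by
  classical
  rw [NP_eq_union hu hζ]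
  have hWm : ∀ p, MeasurableSet (Wset Y u ζ p) := measurableSet_W hY hζ
  have hdisj : Disjoint {ω : Ω | ruinTime Y u ω = ⊤} (⋃ p : ℕ × ℕ × ℕ, Wset Y u ζ p) := by
    rw [Set.disjoint_left]
    rintro ω h1 h2
    simp only [Set.mem_iUnion] at h2
    obtain ⟨⟨z, t, ρ⟩, -, ⟨h3, -⟩, -⟩ := h2
    rw [Set.mem_setOf_eq] at h1
    rw [h1] at h3
    exact (ENat.coe_lt_top t).ne' h3
  rw [measure_union hdisj (MeasurableSet.iUnion hWm)]
  congr 1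
  have hpd : Pairwise (Function.onFun Disjoint fun p : ℕ × ℕ × ℕ => Wset Y u ζ p) := by
    rintro ⟨z, t, ρ⟩ ⟨z', t', ρ'⟩ hne
    simp only [Function.onFun]
    rw [Set.disjoint_left]
    rintro ω ⟨-, ⟨ha1, ha2⟩, ha3, -⟩ ⟨-, ⟨hb1, hb2⟩, hb3, -⟩
    have ht : t = t' := by rw [ha1] at hb1; exact_mod_cast hb1
    subst ht
    have hz : z = z' := by rw [ha2] at hb2; omega
    subst hz
    have hρ : ρ = ρ' := by rw [ha3] at hb3; exact_mod_cast hb3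
    subst hρ
    exact hne rfl
  rw [measure_iUnion hpd hWm]
  -- compute the triple sum
  have hterm : ∀ p : ℕ × ℕ × ℕ, ℙ (Wset Y u ζ p) =
      if p.1 < ζ ∧ 1 ≤ p.2.2 ∧ p.2.2 ≤ ζ then
        ℙ {ω : Ω | ruinTime Y u ω = (p.2.1 : ℕ∞) ∧ riskProc Y u p.2.1 ω = -(p.1 : ℤ)} *
          (ℙ {ω : Ω | hitTime Y ((p.1 : ℤ) + 1) ω = (p.2.2 : ℕ∞)} *
            ℙ {ω : Ω | parisian Y 1 ζ ω = ⊤}) else 0 := fun ⟨z, t, ρ⟩ =>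
    measure_Wset hY hindep hid hζ z t ρ
  calc ∑' p : ℕ × ℕ × ℕ, ℙ (Wset Y u ζ p)
      = ∑' z : ℕ, ∑' t : ℕ, ∑' ρ : ℕ, ℙ (Wset Y u ζ (z, t, ρ)) := by
        rw [ENNReal.tsum_prod']
        exact tsum_congr fun z => ENNReal.tsum_prod'
    _ = ∑ z ∈ Finset.range ζ,
          ℙ {ω : Ω | ∃ s : ℕ, ruinTime Y u ω = (s : ℕ∞) ∧ riskProc Y u s ω = -(z : ℤ)} *
            ℙ {ω : Ω | hitTime Y ((z : ℤ) + 1) ω ≤ (ζ : ℕ∞)} *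
            ℙ {ω : Ω | parisian Y 1 ζ ω = ⊤} := by
        rw [tsum_eq_sum (s := Finset.range ζ) ?hzero]
        case hzero =>
          intro z hz
          rw [Finset.mem_range, not_lt] at hz
          have : ∀ t ρ : ℕ, ℙ (Wset Y u ζ (z, t, ρ)) = 0 := by
            intro t ρ
            rw [hterm (z, t, ρ), if_neg (by rintro ⟨hcon, -⟩; omega)]
          simp [this]
        refine Finset.sum_congr rfl fun z hz => ?_
        rw [Finset.mem_range] at hz
        have hone : ∀ t : ℕ, ∑' ρ : ℕ, ℙ (Wset Y u ζ (z, t, ρ)) =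
            ℙ {ω : Ω | ruinTime Y u ω = (t : ℕ∞) ∧ riskProc Y u t ω = -(z : ℤ)} *
              (ℙ {ω : Ω | hitTime Y ((z : ℤ) + 1) ω ≤ (ζ : ℕ∞)} *
                ℙ {ω : Ω | parisian Y 1 ζ ω = ⊤}) := by
          intro t
          rw [tsum_eq_sum (s := Finset.Icc 1 ζ) ?hz2]
          case hz2 =>
            intro ρ hρ
            rw [Finset.mem_Icc] at hρ
            rw [hterm (z, t, ρ), if_neg (by rintro ⟨-, hc1, hc2⟩; exact hρ ⟨hc1, hc2⟩)]
          rw [measure_hitLe hY _ hζ, Finset.sum_mul, Finset.mul_sum]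
          refine Finset.sum_congr rfl fun ρ hρ => ?_
          rw [Finset.mem_Icc] at hρ
          rw [hterm (z, t, ρ), if_pos ⟨hz, hρ.1, hρ.2⟩]
        rw [tsum_congr hone, ENNReal.tsum_mul_right, ← measure_deficit hY z, mul_assoc]
    _ = (∑ z ∈ Finset.range ζ,
          ℙ {ω : Ω | ∃ s : ℕ, ruinTime Y u ω = (s : ℕ∞) ∧ riskProc Y u s ω = -(z : ℤ)} *
            ℙ {ω : Ω | hitTime Y ((z : ℤ) + 1) ω ≤ (ζ : ℕ∞)}) *
          ℙ {ω : Ω | parisian Y 1 ζ ω = ⊤} := by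
        rw [Finset.sum_mul]

end Master

/-! ### Positivity of the no-ruin probability via the strong law -/

section SLLN

variable [IsProbabilityMeasure (ℙ : Measure Ω)]
  (hY : ∀ i, Measurable (Y i))
  (hindep : iIndepFun Y ℙ)
  (hid : ∀ i, IdentDistrib (Y i) (Y 0) ℙ ℙ)
  (hint : Integrable (fun ω => (Y 0 ω : ℝ)) ℙ)
  (hμ : ∫ ω, (Y 0 ω : ℝ) ∂ℙ < 1)

/-- The event that the aggregate claims stay below `n + m` forever. -/
def Bbd (Y : ℕ → Ω → ℕ) (m : ℕ) : Set Ω := {ω | ∀ n, aggClaims Y n ω ≤ n + m}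

include hint hμ in
lemma prob_zero_claim_pos : 0 < ℙ {ω : Ω | Y 0 ω = 0} := by
  rw [pos_iff_ne_zero]
  intro h0
  have hae : ∀ᵐ ω ∂(ℙ : Measure Ω), Y 0 ω ≠ 0 := by
    rw [ae_iff]
    simpa using h0
  have hge : (fun _ : Ω => (1 : ℝ)) ≤ᵐ[ℙ] fun ω => (Y 0 ω : ℝ) := by
    filter_upwards [hae] with ω hω
    have : 1 ≤ Y 0 ω := Nat.one_le_iff_ne_zero.2 hω
    exact_mod_cast this
  have := integral_mono_ae (integrable_const 1) hint hge
  rw [integral_const] at this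
  simp only [measure_univ, ENNReal.toReal_one, probReal_univ, mul_one, smul_eq_mul, one_mul] at this
  linarith

lemma aggClaims_mono (ω : Ω) {n n' : ℕ} (h : n ≤ n') : aggClaims Y n ω ≤ aggClaims Y n' ω :=
  Finset.sum_le_sum_of_subset (Finset.range_subset_range.2 h)

include hY hindep hid hint hμ in
lemma ae_exists_bound : ∀ᵐ ω ∂(ℙ : Measure Ω), ∃ m : ℕ, ω ∈ Bbd Y m := by
  have hX : ∀ i, Measurable fun ω => (Y i ω : ℝ) := fun i =>
    measurable_from_top.comp (hY i)
  have hindep' : Pairwise (Function.onFun (IndepFun · · ℙ) fun i (ω : Ω) => (Y i ω : ℝ)) := by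
    intro i j hij
    exact (hindep.comp (fun _ => (Nat.cast : ℕ → ℝ)) fun _ => measurable_from_top).indepFun hij
  have hident : ∀ i, IdentDistrib (fun ω : Ω => (Y i ω : ℝ)) (fun ω : Ω => (Y 0 ω : ℝ)) ℙ ℙ :=
    fun i => (hid i).comp measurable_from_top
  have hsl := strong_law_ae_real (fun i (ω : Ω) => (Y i ω : ℝ)) hint hindep' hident
  filter_upwards [hsl] with ω hω
  have hlt : ∀ᶠ n : ℕ in atTop,
      (∑ i ∈ Finset.range n, (Y i ω : ℝ)) / n < 1 := hω.eventually_lt_const hμ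
  obtain ⟨N, hN⟩ := eventually_atTop.1 hlt
  refine ⟨aggClaims Y (N + 1) ω, fun n => ?_⟩
  rcases le_or_gt n (N + 1) with hn | hn
  · have := aggClaims_mono (Y := Y) ω hn
    omega
  · have h1 := hN n (by omega)
    have hnpos : (0 : ℝ) < n := by
      have : 0 < n := by omega
      exact_mod_cast this
    rw [div_lt_one hnpos] at h1
    have hsum : (aggClaims Y n ω : ℝ) = ∑ i ∈ Finset.range n, (Y i ω : ℝ) := by
      unfold aggClaims; push_cast; ring
    rw [← hsum] at h1
    have : aggClaims Y n ω < n := by exact_mod_cast h1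
    omega

include hY hindep hid hint hμ in
lemma exists_Bbd_pos : ∃ m : ℕ, 0 < ℙ (Bbd Y m) := by
  by_contra hc
  push_neg at hc
  have hzero : ∀ m, ℙ (Bbd Y m) = 0 := fun m => le_antisymm (hc m) zero_le
  have h1 : ℙ (⋃ m : ℕ, Bbd Y m) = 0 := measure_iUnion_null hzero
  have h2 : ℙ ((⋃ m : ℕ, Bbd Y m)ᶜ) = 0 := by
    have := ae_exists_bound hY hindep hid hint hμ
    rw [ae_iff] at this
    convert this using 2
    ext ω
    simp [Bbd]
  have := measure_univ (μ := (ℙ : Measure Ω))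
  have hle : ℙ (Set.univ : Set Ω) ≤ ℙ (⋃ m : ℕ, Bbd Y m) + ℙ ((⋃ m : ℕ, Bbd Y m)ᶜ) := by
    rw [← Set.union_compl_self (⋃ m : ℕ, Bbd Y m)] at this ⊢
    exact measure_union_le _ _
  rw [h1, h2] at hle
  rw [this] at hle
  simp at hle

lemma measurableSet_PBpath (m : ℕ) :
    MeasurableSet {f : ℕ → ℕ | ∀ n, aggClaims coordY n f ≤ n + m} := by
  have h : {f : ℕ → ℕ | ∀ n, aggClaims coordY n f ≤ n + m} =
      ⋂ n : ℕ, (fun f => aggClaims coordY n f) ⁻¹' {k | k ≤ n + m} := by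
    ext f; simp [Set.mem_iInter]
  rw [h]
  refine MeasurableSet.iInter fun n => ?_
  have hm : Measurable fun f : ℕ → ℕ => aggClaims coordY n f := by
    unfold aggClaims coordY
    exact Finset.measurable_sum _ fun i _ => measurable_pi_apply i
  exact hm trivial

include hY hindep hid in
lemma Bbd_step (m : ℕ) : ℙ {ω : Ω | Y 0 ω = 0} * ℙ (Bbd Y (m + 1)) ≤ ℙ (Bbd Y m) := by
  classical
  set PB : Set (ℕ → ℕ) := {f | ∀ n, aggClaims coordY n f ≤ n + (m + 1)} with hPB
  have hPBm : MeasurableSet PB := measurableSet_PBpath (m + 1)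
  -- the zero-claim event as an event of the first claim
  set C : Set (Fin 1 → ℕ) := {v | v 0 = 0} with hC
  have hA : {ω : Ω | Y 0 ω = 0} = (fun ω (i : Fin 1) => Y i ω) ⁻¹' C := rfl
  have hsub : {ω : Ω | Y 0 ω = 0} ∩ XY Y 1 ⁻¹' PB ⊆ Bbd Y m := by
    rintro ω ⟨h1, h2⟩
    rw [Set.mem_setOf_eq] at h1
    rw [Set.mem_preimage, hPB, Set.mem_setOf_eq] at h2
    intro n
    cases n with
    | zero => simp [aggClaims]
    | succ k =>
      have hk := h2 k
      have hsum : aggClaims Y (k + 1) ω = Y 0 ω + aggClaims coordY k (XY Y 1 ω) := by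
        unfold aggClaims coordY XY
        rw [Finset.sum_range_succ' (fun i => Y i ω) k]
        have : ∀ i, Y (i + 1) ω = Y (1 + i) ω := fun i => by rw [add_comm]
        rw [add_comm]
        congr 1
        exact Finset.sum_congr rfl fun i _ => this i
      rw [hsum, h1]
      omega
  have hfac : ℙ ({ω : Ω | Y 0 ω = 0} ∩ XY Y 1 ⁻¹' PB) =
      ℙ {ω : Ω | Y 0 ω = 0} * ℙ (XY Y 1 ⁻¹' PB) := by
    rw [hA]
    exact factor_meas hY hindep 1 C hPBm
  have hshift : ℙ (XY Y 1 ⁻¹' PB) = ℙ (XY Y 0 ⁻¹' PB) := by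
    rw [← Measure.map_apply (measurable_XY hY 1) hPBm,
      ← Measure.map_apply (measurable_XY hY 0) hPBm, map_XY_eq hY hindep hid 1]
  have hB1 : XY Y 0 ⁻¹' PB = Bbd Y (m + 1) := by
    ext ω
    rw [Set.mem_preimage, hPB, Set.mem_setOf_eq]
    have hag : ∀ n, aggClaims coordY n (XY Y 0 ω) = aggClaims Y n ω := by
      intro n
      unfold aggClaims coordY XY
      exact Finset.sum_congr rfl fun i _ => by rw [zero_add]
    simp only [hag]
    rfl
  calc ℙ {ω : Ω | Y 0 ω = 0} * ℙ (Bbd Y (m + 1))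
      = ℙ ({ω : Ω | Y 0 ω = 0} ∩ XY Y 1 ⁻¹' PB) := by rw [hfac, hshift, hB1]
    _ ≤ ℙ (Bbd Y m) := measure_mono hsub

include hY hindep hid hint hμ in
lemma ruinTop_pos : 0 < ℙ {ω : Ω | ruinTime Y (1 : ℤ) ω = ⊤} := by
  have hp0 := prob_zero_claim_pos (Y := Y) hint hμ
  obtain ⟨m, hm⟩ := exists_Bbd_pos hY hindep hid hint hμ
  have hB0 : 0 < ℙ (Bbd Y 0) := by
    induction m with
    | zero => exact hm
    | succ k ih =>
      refine ih ?_
      calc (0 : ℝ≥0∞) < ℙ {ω : Ω | Y 0 ω = 0} * ℙ (Bbd Y (k + 1)) :=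
            ENNReal.mul_pos (pos_iff_ne_zero.1 hp0) (pos_iff_ne_zero.1 hm)
        _ ≤ ℙ (Bbd Y k) := Bbd_step hY hindep hid k
  refine lt_of_lt_of_le hB0 (measure_mono ?_)
  intro ω hω
  rw [Set.mem_setOf_eq, ruinTime_eq_top_iff le_rfl]
  intro t
  have h1 : aggClaims Y t ω ≤ t := by have := hω t; omega
  unfold riskProc
  have h2 : (aggClaims Y t ω : ℤ) ≤ t := by exact_mod_cast h1
  omega

end SLLN

/-- `P_v(T_0 < ∞, -R_{T_0} = z) · P(τ_{z+1} ≤ ζ)` summed over `z = 0, ..., ζ-1`. -/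
def deficitSum (Y : ℕ → Ω → ℕ) (v : ℤ) (ζ : ℕ) : ℝ :=
  ∑ z ∈ Finset.range ζ,
    (ℙ {ω | ∃ s : ℕ, ruinTime Y v ω = (s : ℕ∞) ∧ riskProc Y v s ω = -(z : ℤ)}).toReal *
    (ℙ {ω | hitTime Y ((z : ℤ) + 1) ω ≤ (ζ : ℕ∞)}).toReal

section Final

variable [IsProbabilityMeasure (ℙ : Measure Ω)]
  (hY : ∀ i, Measurable (Y i))
  (hindep : iIndepFun Y ℙ)
  (hid : ∀ i, IdentDistrib (Y i) (Y 0) ℙ ℙ)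

include hY hindep hid in
lemma master_real (hu : 1 ≤ u) (hζ : 1 ≤ ζ) :
    (ℙ {ω : Ω | parisian Y u ζ ω = ⊤}).toReal =
      (ℙ {ω : Ω | ruinTime Y u ω = ⊤}).toReal +
        deficitSum Y u ζ * (ℙ {ω : Ω | parisian Y 1 ζ ω = ⊤}).toReal := by
  rw [master hY hindep hid hu hζ]
  have hsum_ne : (∑ z ∈ Finset.range ζ,
      ℙ {ω : Ω | ∃ s : ℕ, ruinTime Y u ω = (s : ℕ∞) ∧ riskProc Y u s ω = -(z : ℤ)} *
        ℙ {ω : Ω | hitTime Y ((z : ℤ) + 1) ω ≤ (ζ : ℕ∞)}) ≠ ⊤ := by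
    refine (ENNReal.sum_lt_top.2 fun z _ => ?_).ne
    exact ENNReal.mul_lt_top (measure_lt_top _ _) (measure_lt_top _ _)
  rw [ENNReal.toReal_add (measure_ne_top _ _)
    (ENNReal.mul_ne_top hsum_ne (measure_ne_top _ _)), ENNReal.toReal_mul]
  congr 2
  rw [deficitSum, ENNReal.toReal_sum (fun z _ =>
    ENNReal.mul_ne_top (measure_ne_top _ _) (measure_ne_top _ _))]
  exact Finset.sum_congr rfl fun z _ => ENNReal.toReal_mul

include hY in
lemma parisNe_toReal {v : ℤ} (hv : 1 ≤ v) (hζ : 1 ≤ ζ) :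
    (ℙ {ω : Ω | parisian Y v ζ ω ≠ ⊤}).toReal =
      1 - (ℙ {ω : Ω | parisian Y v ζ ω = ⊤}).toReal := by
  have hset : {ω : Ω | parisian Y v ζ ω ≠ ⊤} = {ω : Ω | parisian Y v ζ ω = ⊤}ᶜ := rfl
  rw [hset, measure_compl (measurableSet_parisTop_omega hY hv hζ) (measure_ne_top _ _),
    measure_univ, ENNReal.toReal_sub_of_le prob_le_one ENNReal.one_ne_top, ENNReal.toReal_one]

include hY in
lemma ruinNe_toReal (v : ℤ) :
    (ℙ {ω : Ω | ruinTime Y v ω ≠ ⊤}).toReal =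
      1 - (ℙ {ω : Ω | ruinTime Y v ω = ⊤}).toReal := by
  have hset : {ω : Ω | ruinTime Y v ω ≠ ⊤} = {ω : Ω | ruinTime Y v ω = ⊤}ᶜ := rfl
  rw [hset, measure_compl (measurableSet_ruinTop hY) (measure_ne_top _ _),
    measure_univ, ENNReal.toReal_sub_of_le prob_le_one ENNReal.one_ne_top, ENNReal.toReal_one]

end Final

/-- Infinite-horizon Parisian ruin probability. -/
theorem parisian_infinite_horizon
    [IsProbabilityMeasure (ℙ : Measure Ω)]
    (Y : ℕ → Ω → ℕ) (hY : ∀ i, Measurable (Y i))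
    (hindep : iIndepFun Y ℙ)
    (hid : ∀ i, IdentDistrib (Y i) (Y 0) ℙ ℙ)
    (hint : Integrable (fun ω => (Y 0 ω : ℝ)) ℙ)
    (hμ : ∫ ω, (Y 0 ω : ℝ) ∂ℙ < 1)
    (u : ℕ) (hu : 1 ≤ u) (ζ : ℕ) (hζ : 1 ≤ ζ) :
    (ℙ {ω | parisian Y (u : ℤ) ζ ω ≠ ⊤}).toReal =
      (ℙ {ω | ruinTime Y (u : ℤ) ω ≠ ⊤}).toReal -
        (1 - (ℙ {ω | parisian Y (1 : ℤ) ζ ω ≠ ⊤}).toReal) * deficitSum Y (u : ℤ) ζ ∧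
    (ℙ {ω | parisian Y (1 : ℤ) ζ ω ≠ ⊤}).toReal =
      ((ℙ {ω | ruinTime Y (1 : ℤ) ω ≠ ⊤}).toReal - deficitSum Y (1 : ℤ) ζ) /
        (1 - deficitSum Y (1 : ℤ) ζ) := by
  have hu' : (1 : ℤ) ≤ (u : ℤ) := by exact_mod_cast hu
  have hmu := master_real hY hindep hid hu' hζ
  have hm1 := master_real hY hindep hid (le_refl (1 : ℤ)) hζ
  have hc1 := parisNe_toReal hY (v := (u : ℤ)) hu' hζ
  have hc2 := parisNe_toReal hY (v := (1 : ℤ)) le_rfl hζ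
  have hc3 := ruinNe_toReal hY (u : ℤ)
  have hc4 := ruinNe_toReal hY (1 : ℤ)
  have hnr1 : 0 < (ℙ {ω : Ω | ruinTime Y (1 : ℤ) ω = ⊤}).toReal :=
    ENNReal.toReal_pos (pos_iff_ne_zero.1 (ruinTop_pos hY hindep hid hint hμ))
      (measure_ne_top _ _)
  set np_u := (ℙ {ω : Ω | parisian Y (u : ℤ) ζ ω = ⊤}).toReal
  set np_1 := (ℙ {ω : Ω | parisian Y (1 : ℤ) ζ ω = ⊤}).toReal
  set nr_u := (ℙ {ω : Ω | ruinTime Y (u : ℤ) ω = ⊤}).toReal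
  set nr_1 := (ℙ {ω : Ω | ruinTime Y (1 : ℤ) ω = ⊤}).toReal
  have key1 : np_1 * (1 - deficitSum Y (1 : ℤ) ζ) = nr_1 := by linear_combination hm1
  have hdenom : 1 - deficitSum Y (1 : ℤ) ζ ≠ 0 := by
    intro h0
    rw [h0, mul_zero] at key1
    linarith
  constructor
  · rw [hc1, hc3, hc2]
    linear_combination -hmu
  · rw [hc2, hc4, eq_div_iff hdenom]
    linear_combination -key1


end
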